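/- Let F be a group, R₀ a subgroup of F, and R the normal closure of R₀ in F (the smallest normal subgroup of F containing R₀). Then the natural homomorphism R₀ → R/[F,R] (sending r₀ to its coset r₀[F,R]) is surjective and has kernel R₀ ∩ [F,R]; consequently R₀/(R₀ ∩ [F,R]) is isomorphic to R/[F,R]. -/

import Mathlib

/-- Let `F` be a group, `R₀ ≤ F` a subgroup and `R` the normal closure of `R₀` in `F`.
The natural homomorphism `R₀ → R/[F,R]`, `r₀ ↦ r₀[F,R]`, is surjective with kernel
`R₀ ∩ [F,R]`; consequently `R₀/(R₀ ∩ [F,R]) ≅ R/[F,R]`. -/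
theorem closure_to_normalClosure_mod_commutator {F : Type*} [Group F] (R₀ : Subgroup F) :
    ∀ φ : ↥R₀ →* (↥(Subgroup.normalClosure (R₀ : Set F)) ⧸
        (⁅(⊤ : Subgroup F), Subgroup.normalClosure (R₀ : Set F)⁆.subgroupOf
          (Subgroup.normalClosure (R₀ : Set F)))),
      (∀ x : ↥R₀, φ x = QuotientGroup.mk ⟨(x : F), Subgroup.le_normalClosure x.2⟩) →
      Function.Surjective φ ∧
      φ.ker = ⁅(⊤ : Subgroup F), Subgroup.normalClosure (R₀ : Set F)⁆.subgroupOf R₀ ∧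
      Nonempty ((↥R₀ ⧸
          ⁅(⊤ : Subgroup F), Subgroup.normalClosure (R₀ : Set F)⁆.subgroupOf R₀) ≃*
        (↥(Subgroup.normalClosure (R₀ : Set F)) ⧸
          ⁅(⊤ : Subgroup F), Subgroup.normalClosure (R₀ : Set F)⁆.subgroupOf
            (Subgroup.normalClosure (R₀ : Set F)))) := by
  intro φ hφ
  set R : Subgroup F := Subgroup.normalClosure (R₀ : Set F) with hR
  set K : Subgroup ↥R := ⁅(⊤ : Subgroup F), R⁆.subgroupOf R with hK
  haveI : K.Normal := (Subgroup.commutator_normal ⊤ R).subgroupOf R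
  have hsurj : Function.Surjective φ := by
    intro y
    obtain ⟨r, rfl⟩ := QuotientGroup.mk_surjective y
    set T : Subgroup F :=
      Subgroup.map R.subtype (Subgroup.comap (QuotientGroup.mk' K) φ.range) with hT
    have hRT : R ≤ T := by
      rw [hR, Subgroup.normalClosure]
      apply (Subgroup.closure_le T).2
      intro x hx
      have hxR : x ∈ R := Subgroup.subset_closure hx
      obtain ⟨a, ha, hconj⟩ := Group.mem_conjugatesOfSet_iff.1 hx
      obtain ⟨f, hf⟩ := isConj_iff.1 hconj
      have haR : a ∈ R := Subgroup.le_normalClosure ha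
      open scoped commutatorElement in
      have hcomm : x⁻¹ * a ∈ ⁅(⊤ : Subgroup F), R⁆ := by
        have : ⁅f, a⁻¹⁆ ∈ ⁅(⊤ : Subgroup F), R⁆ :=
          Subgroup.commutator_mem_commutator (Subgroup.mem_top f) (inv_mem haR)
        have hxa : x⁻¹ * a = ⁅f, a⁻¹⁆ := by
          rw [← hf, commutatorElement_def]
          group
        rwa [hxa]
      refine ⟨⟨x, hxR⟩, ?_, rfl⟩
      show QuotientGroup.mk ⟨x, hxR⟩ ∈ φ.range
      have : QuotientGroup.mk (s := K) ⟨x, hxR⟩ = QuotientGroup.mk ⟨a, haR⟩ := by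
        rw [QuotientGroup.eq]
        exact hcomm
      rw [this, ← hφ ⟨a, ha⟩]
      exact ⟨⟨a, ha⟩, rfl⟩
    have hrT : (r : F) ∈ T := hRT r.2
    obtain ⟨s, hs, hsr⟩ := hrT
    obtain ⟨z, hz⟩ := hs
    obtain rfl : s = r := Subtype.ext hsr
    exact ⟨z, hz⟩
  have hker : φ.ker = ⁅(⊤ : Subgroup F), R⁆.subgroupOf R₀ := by
    ext x
    rw [MonoidHom.mem_ker, hφ x, QuotientGroup.eq_one_iff]
    rfl
  exact ⟨hsurj, hker, ⟨(QuotientGroup.quotientMulEquivOfEq hker.symm).trans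
    (QuotientGroup.quotientKerEquivOfSurjective φ hsurj)⟩⟩
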